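/- The price of anarchy of the non-cooperative AP channel selection game is lower bounded by [Σ_n log₂(1 + (P_n/d_n^θ)/(ω̄_n + (Σ_{i≠n} P_i/d_{in}^θ)/|M_n|))] / [Σ_n log₂(1 + (P_n/d_n^θ)/ω̲_n)], where ω̄_n = max_{m∈M_n} ω^n_m and ω̲_n = min_{m∈M_n} ω^n_m, and PoA = min over Nash equilibria a of Σ_n U_n(a) divided by max over all profiles a of Σ_n U_n(a). -/

import Mathlib

open Finset

theorem stmt9 {I : Type*} [Fintype I] [DecidableEq I] {C : Type*} [DecidableEq C]
    (M : I → Finset C) (hM : ∀ n, (M n).Nonempty)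
    (P d : I → ℝ) (D : I → I → ℝ) (ω : I → C → ℝ) (θ B : ℝ)
    (hP : ∀ i, 0 < P i) (hd : ∀ i, 0 < d i)
    (hD : ∀ i j, i ≠ j → 0 < D i j) (hω : ∀ n c, 0 < ω n c)
    (hθ : 0 < θ) (hB : 0 < B)
    (U : I → (I → C) → ℝ)
    (hU : ∀ n a, U n a = B * Real.logb 2 (1 + (P n / d n ^ θ) /
      (ω n (a n) + ∑ i ∈ Finset.univ.erase n, if a i = a n then P i / D i n ^ θ else 0)))
    (Ξ : Set (I → C))
    (hΞ : Ξ = {a | (∀ n, a n ∈ M n) ∧ ∀ n, ∀ c ∈ M n, U n (Function.update a n c) ≤ U n a})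
    (hΞne : Ξ.Nonempty)
    (worst opt : ℝ)
    (hworst : IsLeast ((fun a => ∑ n : I, U n a) '' Ξ) worst)
    (hopt : IsGreatest ((fun a => ∑ n : I, U n a) '' {a : I → C | ∀ n, a n ∈ M n}) opt) :
    (∑ n : I, Real.logb 2 (1 + (P n / d n ^ θ) /
        ((M n).sup' (hM n) (ω n) + (∑ i ∈ Finset.univ.erase n, P i / D i n ^ θ) / (M n).card)))
      / (∑ n : I, Real.logb 2 (1 + (P n / d n ^ θ) / (M n).inf' (hM n) (ω n)))
      ≤ worst / opt := by
  have h2 : (1:ℝ) < 2 := one_lt_two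
  set S : I → ℝ := fun n => P n / d n ^ θ with hSdef
  have hS : ∀ n, 0 < S n := fun n =>
    div_pos (hP n) (Real.rpow_pos_of_pos (hd n) θ)
  set T : I → ℝ := fun n => ∑ i ∈ Finset.univ.erase n, P i / D i n ^ θ with hTdef
  have hT : ∀ n, 0 ≤ T n := by
    intro n
    apply Finset.sum_nonneg
    intro i hi
    have hin : i ≠ n := Finset.ne_of_mem_erase hi
    exact le_of_lt (div_pos (hP i) (Real.rpow_pos_of_pos (hD i n hin) θ))
  have hterm : ∀ n i, i ∈ Finset.univ.erase n → 0 ≤ P i / D i n ^ θ := by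
    intro n i hi
    have hin : i ≠ n := Finset.ne_of_mem_erase hi
    exact le_of_lt (div_pos (hP i) (Real.rpow_pos_of_pos (hD i n hin) θ))
  set ωmax : I → ℝ := fun n => (M n).sup' (hM n) (ω n) with hωmaxdef
  set ωmin : I → ℝ := fun n => (M n).inf' (hM n) (ω n) with hωmindef
  have hωmax : ∀ n, 0 < ωmax n := by
    intro n
    obtain ⟨c, hc⟩ := hM n
    exact lt_of_lt_of_le (hω n c) (Finset.le_sup' (ω n) hc)
  have hωmin : ∀ n, 0 < ωmin n := by
    intro n
    rw [hωmindef]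
    simp only [Finset.lt_inf'_iff]
    intro c _
    exact hω n c
  -- interference is nonneg
  have hInt : ∀ n (a : I → C) (c : C),
      0 ≤ ∑ i ∈ Finset.univ.erase n, (if a i = c then P i / D i n ^ θ else 0) := by
    intro n a c
    apply Finset.sum_nonneg
    intro i hi
    split
    · exact hterm n i hi
    · exact le_refl 0
  have hdenom2 : ∀ n, 0 < ωmax n + T n / (M n).card := fun n =>
    add_pos_of_pos_of_nonneg (hωmax n) (div_nonneg (hT n) (Nat.cast_nonneg _))
  have harg : ∀ n, 0 < 1 + S n / (ωmax n + T n / (M n).card) := by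
    intro n
    have := div_pos (hS n) (hdenom2 n)
    linarith
  -- pigeonhole
  have pigeon : ∀ n (a : I → C), ∃ c ∈ M n,
      (∑ i ∈ Finset.univ.erase n, if a i = c then P i / D i n ^ θ else 0)
        ≤ T n / (M n).card := by
    intro n a
    apply Finset.exists_le_of_sum_le (hM n)
    have hswap : (∑ c ∈ M n, ∑ i ∈ Finset.univ.erase n,
        (if a i = c then P i / D i n ^ θ else 0))
        = ∑ i ∈ Finset.univ.erase n, ∑ c ∈ M n,
        (if a i = c then P i / D i n ^ θ else 0) := Finset.sum_comm
    have hle : (∑ c ∈ M n, ∑ i ∈ Finset.univ.erase n,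
        (if a i = c then P i / D i n ^ θ else 0)) ≤ T n := by
      rw [hswap]
      apply Finset.sum_le_sum
      intro i hi
      rw [Finset.sum_ite_eq (M n) (a i) (fun _ => P i / D i n ^ θ)]
      split
      · exact le_rfl
      · exact hterm n i hi
    have hcard : (0:ℝ) < (M n).card := by
      exact_mod_cast Finset.card_pos.mpr (hM n)
    calc (∑ c ∈ M n, ∑ i ∈ Finset.univ.erase n,
        (if a i = c then P i / D i n ^ θ else 0)) ≤ T n := hle
      _ = ∑ c ∈ M n, T n / (M n).card := by
          rw [Finset.sum_const, nsmul_eq_mul, mul_div_cancel₀]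
          exact ne_of_gt hcard
  -- per-player Nash lower bound
  have NE_bound : ∀ a ∈ Ξ, ∀ n,
      B * Real.logb 2 (1 + S n / (ωmax n + T n / (M n).card)) ≤ U n a := by
    intro a ha n
    rw [hΞ] at ha
    obtain ⟨haM, haNE⟩ := ha
    obtain ⟨c, hcM, hcI⟩ := pigeon n a
    have hdev := haNE n c hcM
    have hval : U n (Function.update a n c) = B * Real.logb 2
        (1 + S n / (ω n c + ∑ i ∈ Finset.univ.erase n,
          (if a i = c then P i / D i n ^ θ else 0))) := by
      rw [hU]
      have hsum : (∑ i ∈ Finset.univ.erase n,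
          if Function.update a n c i = Function.update a n c n
            then P i / D i n ^ θ else 0)
          = ∑ i ∈ Finset.univ.erase n, (if a i = c then P i / D i n ^ θ else 0) := by
        apply Finset.sum_congr rfl
        intro i hi
        rw [Function.update_of_ne (Finset.ne_of_mem_erase hi), Function.update_self]
      rw [hsum, Function.update_self]
    have hlow : B * Real.logb 2 (1 + S n / (ωmax n + T n / (M n).card))
        ≤ U n (Function.update a n c) := by
      rw [hval]
      apply mul_le_mul_of_nonneg_left _ hB.le
      apply Real.logb_le_logb_of_le h2 (harg n)
      · have hc1 : ω n c ≤ ωmax n := Finset.le_sup' (ω n) hcM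
        have hden1 : 0 < ω n c + ∑ i ∈ Finset.univ.erase n,
            (if a i = c then P i / D i n ^ θ else 0) :=
          add_pos_of_pos_of_nonneg (hω n c) (hInt n a c)
        have : S n / (ωmax n + T n / (M n).card) ≤ S n / (ω n c +
            ∑ i ∈ Finset.univ.erase n, (if a i = c then P i / D i n ^ θ else 0)) := by
          apply div_le_div_of_nonneg_left (hS n).le hden1
          exact add_le_add hc1 hcI
        linarith
    exact hlow.trans hdev
  -- per-player upper bound
  have OPT_bound : ∀ a : I → C, (∀ k, a k ∈ M k) → ∀ n,
      U n a ≤ B * Real.logb 2 (1 + S n / ωmin n) := by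
    intro a ha n
    rw [hU]
    apply mul_le_mul_of_nonneg_left _ hB.le
    have hden0 : 0 < ω n (a n) + ∑ i ∈ Finset.univ.erase n,
        (if a i = a n then P i / D i n ^ θ else 0) :=
      add_pos_of_pos_of_nonneg (hω n (a n)) (hInt n a (a n))
    have harg0 : 0 < 1 + S n / (ω n (a n) + ∑ i ∈ Finset.univ.erase n,
        (if a i = a n then P i / D i n ^ θ else 0)) := by
      have := div_pos (hS n) hden0
      linarith
    apply Real.logb_le_logb_of_le h2 harg0
    · have hden : 0 < ω n (a n) + ∑ i ∈ Finset.univ.erase n,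
          (if a i = a n then P i / D i n ^ θ else 0) :=
        add_pos_of_pos_of_nonneg (hω n (a n)) (hInt n a (a n))
      have hmin : ωmin n ≤ ω n (a n) := Finset.inf'_le (ω n) (ha n)
      have : S n / (ω n (a n) + ∑ i ∈ Finset.univ.erase n,
          (if a i = a n then P i / D i n ^ θ else 0)) ≤ S n / ωmin n := by
        apply div_le_div_of_nonneg_left (hS n).le (hωmin n)
        calc ωmin n ≤ ω n (a n) := hmin
          _ ≤ _ := le_add_of_nonneg_right (hInt n a (a n))
      linarith
  set A : ℝ := ∑ n : I, Real.logb 2 (1 + S n / (ωmax n + T n / (M n).card)) with hAdef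
  set Bt : ℝ := ∑ n : I, Real.logb 2 (1 + S n / ωmin n) with hBtdef
  have hA0 : 0 ≤ A := by
    apply Finset.sum_nonneg
    intro n _
    apply Real.logb_nonneg h2
    have := div_pos (hS n) (hdenom2 n)
    linarith
  -- worst ≥ B * A
  obtain ⟨a₀, ha₀Ξ, ha₀w⟩ := hworst.1
  have hworstge : B * A ≤ worst := by
    rw [← ha₀w, hAdef, Finset.mul_sum]
    exact Finset.sum_le_sum fun n _ => NE_bound a₀ ha₀Ξ n
  -- opt ≤ B * Bt
  obtain ⟨a₁, ha₁M, ha₁o⟩ := hopt.1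
  have hoptle : opt ≤ B * Bt := by
    rw [← ha₁o, hBtdef, Finset.mul_sum]
    exact Finset.sum_le_sum fun n _ => OPT_bound a₁ ha₁M n
  rcases isEmpty_or_nonempty I with hI | hI
  · have hw0 : worst = 0 := by rw [← ha₀w]; simp
    have ho0 : opt = 0 := by rw [← ha₁o]; simp
    have hA : A = 0 := by rw [hAdef]; simp
    have hBt0 : Bt = 0 := by rw [hBtdef]; simp
    rw [hw0, ho0, hA, hBt0]
  · -- opt > 0
    have hoptpos : 0 < opt := by
      rw [← ha₁o]
      apply Finset.sum_pos _ Finset.univ_nonempty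
      intro n _
      rw [hU]
      apply mul_pos hB
      apply Real.logb_pos h2
      have hden : 0 < ω n (a₁ n) + ∑ i ∈ Finset.univ.erase n,
          (if a₁ i = a₁ n then P i / D i n ^ θ else 0) :=
        add_pos_of_pos_of_nonneg (hω n (a₁ n)) (hInt n a₁ (a₁ n))
      have : 0 < S n / (ω n (a₁ n) + ∑ i ∈ Finset.univ.erase n,
          (if a₁ i = a₁ n then P i / D i n ^ θ else 0)) := div_pos (hS n) hden
      linarith
    have hBtpos : 0 < Bt := by
      apply Finset.sum_pos _ Finset.univ_nonempty
      intro n _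
      apply Real.logb_pos h2
      have : 0 < S n / ωmin n := div_pos (hS n) (hωmin n)
      linarith
    have key1 : A / Bt = (B * A) / (B * Bt) := by
      rw [mul_div_mul_left _ _ (ne_of_gt hB)]
    rw [key1]
    calc (B * A) / (B * Bt) ≤ (B * A) / opt := by
          apply div_le_div_of_nonneg_left (by positivity) hoptpos hoptle
      _ ≤ worst / opt := (div_le_div_iff_of_pos_right hoptpos).mpr hworstge
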